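/- Let A be an associative algebra and M an A-bimodule. A linear map P : M → A is a relative averaging operator if and only if the map N_P : A ⊕ M → A ⊕ M, N_P(a, u) = (P(u), 0), is a Nijenhuis operator on the diassociative algebra A ⊕ M. -/
import Mathlib


/-- An `A`-bimodule structure on `M` over an associative algebra `A`:
left and right actions that are biadditive and associative/compatible. -/
structure ABimodule (A : Type*) (M : Type*) [Ring A] [AddCommGroup M] where
  lsmul : A → M → M
  rsmul : M → A → M
  lsmul_add : ∀ a u v, lsmul a (u + v) = lsmul a u + lsmul a v
  add_lsmul : ∀ a b u, lsmul (a + b) u = lsmul a u + lsmul b u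
  rsmul_add : ∀ u v a, rsmul (u + v) a = rsmul u a + rsmul v a
  add_rsmul : ∀ u a b, rsmul u (a + b) = rsmul u a + rsmul u b
  mul_lsmul : ∀ a b u, lsmul (a * b) u = lsmul a (lsmul b u)
  rsmul_mul : ∀ u a b, rsmul u (a * b) = rsmul (rsmul u a) b
  lsmul_rsmul : ∀ a u b, rsmul (lsmul a u) b = lsmul a (rsmul u b)

/-- `P : M → A` is a relative averaging operator:
`P(u)·P(v) = P(P(u)·v) = P(u·P(v))`. -/
def IsRelAvgOp {A M : Type*} [Ring A] [AddCommGroup M]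
    (ρ : ABimodule A M) (P : M → A) : Prop :=
  ∀ u v : M, P u * P v = P (ρ.lsmul (P u) v) ∧ P u * P v = P (ρ.rsmul u (P v))

/-- `P : M → A` is a relative averaging operator iff
`N_P(a,u) = (P u, 0)` is a Nijenhuis operator on the diassociative algebra `A ⊕ M`
(with `(a,u) ⊣ (b,v) = (a·b, u·b)`, `(a,u) ⊢ (b,v) = (a·b, a·v)`). -/
theorem isRelAvgOp_iff_nijenhuis
    (A M : Type*) [Ring A] [AddCommGroup M] (ρ : ABimodule A M) (P : M → A) :
    IsRelAvgOp ρ P ↔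
      (∀ x y : A × M,
        (let dl : A × M → A × M → A × M := fun x y => (x.1 * y.1, ρ.rsmul x.2 y.1)
         let dr : A × M → A × M → A × M := fun x y => (x.1 * y.1, ρ.lsmul x.1 y.2)
         let NP : A × M → A × M := fun x => (P x.2, 0)
         dl (NP x) (NP y) = NP (dl (NP x) y + dl x (NP y) - NP (dl x y)) ∧
         dr (NP x) (NP y) = NP (dr (NP x) y + dr x (NP y) - NP (dr x y)))) := by
  have hr0 : ∀ a : A, ρ.rsmul 0 a = 0 := by
    intro a
    have h := ρ.rsmul_add 0 0 a
    rw [add_zero] at h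
    exact (add_eq_left.mp h.symm)
  have hl0 : ∀ a : A, ρ.lsmul a 0 = 0 := by
    intro a
    have h := ρ.lsmul_add a 0 0
    rw [add_zero] at h
    exact (add_eq_left.mp h.symm)
  constructor
  · intro hP x y
    obtain ⟨h1, h2⟩ := hP x.2 y.2
    constructor
    · simp only [Prod.mk_add_mk, Prod.mk_sub_mk, Prod.mk.injEq, hr0, hl0]
      exact ⟨by simpa using h2, trivial⟩
    · simp only [Prod.mk_add_mk, Prod.mk_sub_mk, Prod.mk.injEq, hr0, hl0]
      exact ⟨by simpa using h1, trivial⟩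
  · intro h u v
    obtain ⟨h1, h2⟩ := h (0, u) (0, v)
    simp only [Prod.mk_add_mk, Prod.mk_sub_mk, Prod.mk.injEq, hr0, hl0] at h1 h2
    exact ⟨by simpa using h2.1, by simpa using h1.1⟩
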